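/- Let Σ be a planar model satisfying Assumption (*) and suppose α := dim(Σ) ≥ 1. Then for ℙ-almost every ω ∈ Ω the following holds: for every ε > 0 there exists m₀(ω,ε) such that for all m > m₀(ω,ε), inf_{W ∈ ℝP¹} H_m(π_W η^(ω)) ≥ α − 1 − ε. -/

import Mathlib

open MeasureTheory Filter Set
open scoped ENNReal Topology Classical

noncomputable section

namespace SSmodel

/-- The left shift on sequence space. -/
def shiftMap {I : Type} (ω : ℕ → I) : ℕ → I := fun n => ω (n + 1)

/-- The `j`-th iterate of the left shift. -/
def shiftN {I : Type} (j : ℕ) (ω : ℕ → I) : ℕ → I := fun n => ω (n + j)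

/-- A planar model: a finite family of homogeneous self-similar IFSs on ℂ together with
probability vectors and a selection measure on the symbolic space. -/
structure PlanarModel (I : Type) [Fintype I] [MeasurableSpace I] where
  k : I → ℕ
  k_pos : ∀ i, 0 < k i
  lam : I → ℂ
  lam_ne : ∀ i, lam i ≠ 0
  lam_lt : ∀ i, ‖lam i‖ < 1
  tr : (i : I) → Fin (k i) → ℂ
  p : (i : I) → Fin (k i) → ℝ
  p_pos : ∀ i j, 0 < p i j
  p_sum : ∀ i, ∑ j, p i j = 1
  P : Measure (ℕ → I)
  P_prob : IsProbabilityMeasure P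

namespace PlanarModel

variable {I : Type} [Fintype I] [MeasurableSpace I] (M : PlanarModel I)

/-- The coding map Π_ω. -/
def codingMap (ω : ℕ → I) (u : (n : ℕ) → Fin (M.k (ω n))) : ℂ :=
  ∑' n : ℕ, (∏ j ∈ Finset.range n, M.lam (ω j)) * M.tr (ω n) (u n)

/-- Characterization of the infinite product measure ⊗ₙ p_{ωₙ} via cylinders. -/
def IsProductMeasure (ω : ℕ → I) (μ : Measure ((n : ℕ) → Fin (M.k (ω n)))) : Prop :=
  IsProbabilityMeasure μ ∧
    ∀ (n : ℕ) (u : (j : Fin n) → Fin (M.k (ω j.val))),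
      μ {x | ∀ j : Fin n, x j.val = u j} = ∏ j : Fin n, ENNReal.ofReal (M.p (ω j.val) (u j))

/-- `η` is the family of random measures η^(ω) generated by the model:
η^(ω) is the pushforward under Π_ω of the product measure ⊗ₙ p_{ωₙ}. -/
def IsCodingFamily (η : (ℕ → I) → Measure ℂ) : Prop :=
  ∀ ω : ℕ → I, ∃ μ : Measure ((n : ℕ) → Fin (M.k (ω n))),
    M.IsProductMeasure ω μ ∧ η ω = μ.map (M.codingMap ω)

/-- Assumption (*) : the selection measure is shift-invariant and ergodic, some IFS occurring
with positive probability has two distinct maps, and some rotation occurring with positive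
probability is not real. -/
def AssumptionStar : Prop :=
  Ergodic shiftMap M.P ∧
    (∃ i₀ : I, M.P {ω | ω 0 = i₀} ≠ 0 ∧ ∃ j j' : Fin (M.k i₀), M.tr i₀ j ≠ M.tr i₀ j') ∧
    (∃ i₁ : I, M.P {ω | ω 0 = i₁} ≠ 0 ∧ (M.lam i₁).im ≠ 0)

/-- Non-degeneracy of the model. -/
def NonDegenerate : Prop :=
  ∃ i₀ : I, M.P {ω | ω 0 = i₀} ≠ 0 ∧ ∃ j j' : Fin (M.k i₀), M.tr i₀ j ≠ M.tr i₀ j'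

/-- The similarity dimension of the model (entropy over Lyapunov exponent). -/
def sdim : ℝ :=
  (∫ ω, (-∑ j, M.p (ω 0) j * Real.log (M.p (ω 0) j)) ∂M.P) /
    (-∫ ω, Real.log (‖M.lam (ω 0)‖) ∂M.P)

/-- f_u^(ω)(0), for a word u of length n. -/
def finCode (ω : ℕ → I) (n : ℕ) (u : (j : Fin n) → Fin (M.k (ω j.val))) : ℂ :=
  ∑ m : Fin n, (∏ j ∈ Finset.range m.val, M.lam (ω j)) * M.tr (ω m.val) (u m)

/-- The product of the contraction parts along the first n symbols. -/
def lamProd (ω : ℕ → I) (n : ℕ) : ℂ := ∏ j ∈ Finset.range n, M.lam (ω j)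

/-- The minimal distance Δ_n^(ω) between distinct cylinder points. -/
def Delta (ω : ℕ → I) (n : ℕ) : ℝ :=
  if ∃ u v : (j : Fin n) → Fin (M.k (ω j.val)), u ≠ v then
    sInf {d : ℝ | ∃ u v : (j : Fin n) → Fin (M.k (ω j.val)), u ≠ v ∧
      d = ‖M.finCode ω n u - M.finCode ω n v‖}
  else 0

/-- `R` is a good radius for the model: the closed ball B(0,R) is mapped into itself by all the
maps and 2·R·r_min > 1/2. -/
def GoodRadius (R : ℝ) : Prop :=
  0 < R ∧ (∀ (i : I) (j : Fin (M.k i)) (z : ℂ), ‖z‖ ≤ R →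
      ‖M.lam i * z + M.tr i j‖ < R) ∧
    ∀ i : I, (1 : ℝ) / 2 < 2 * R * ‖M.lam i‖

/-- `np ω n` is the integer n'(ω) adapted to scale 2^{-n}: it satisfies
2R·∏_{i<n'} r_{ω_i} ≤ 2^{-n} ≤ 2R·∏_{i<n'-1} r_{ω_i}. -/
def IsNPrime (R : ℝ) (np : (ℕ → I) → ℕ → ℕ) : Prop :=
  ∀ (ω : ℕ → I) (n : ℕ),
    2 * R * (∏ i ∈ Finset.range (np ω n), ‖M.lam (ω i)‖) ≤ (2 : ℝ) ^ (-(n : ℤ)) ∧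
      (2 : ℝ) ^ (-(n : ℤ)) ≤ 2 * R * ∏ i ∈ Finset.range (np ω n - 1), ‖M.lam (ω i)‖

/-- The point of the circle (in the squared identification ℝP¹ ≅ 𝕋) corresponding to the
rotation part φ_i of the i-th IFS: φ_i². -/
def rotPt (i : I) : ℂ := (M.lam i / (‖M.lam i‖ : ℂ)) ^ 2

/-- Generators of the rotation group G_Σ (squared identification), together with inverses. -/
def rotGens : Set ℂ := {z | ∃ i : I, z = M.rotPt i ∨ z = (starRingEnd ℂ) (M.rotPt i)}

/-- The closed orbit G_Σ·v of a point v of the circle. -/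
def orbitClosure (v : ℂ) : Set ℂ :=
  closure ((fun g => g * v) '' ((Submonoid.closure M.rotGens : Submonoid ℂ) : Set ℂ))

/-- Characterization of ξ^(W) (for the line W corresponding to the circle point v in the
squared identification): the unique probability measure on the coset G_Σ·v invariant under
all the rotations of the model. -/
def IsXiW (v : ℂ) (ξ : Measure ℂ) : Prop :=
  IsProbabilityMeasure ξ ∧ (∀ i : I, ξ.map (fun z => M.rotPt i * z) = ξ) ∧
    ξ (M.orbitClosure v) = 1

/-- The discrete measure ν^{(ω,n)} = ∑_u p_u δ_{f_u^(ω)(0)}. -/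
def nuMeasure (ω : ℕ → I) (n : ℕ) : Measure ℂ :=
  ∑ u : (j : Fin n) → Fin (M.k (ω j.val)),
    ENNReal.ofReal (∏ j : Fin n, M.p (ω j.val) (u j)) • Measure.dirac (M.finCode ω n u)

end PlanarModel

/-! ### Entropy, components, projections -/

/-- -x·log₂ x. -/
def plog (x : ℝ) : ℝ := -(x * Real.logb 2 x)

/-- Level-n dyadic cell of ℝ² ≅ ℂ with index a ∈ ℤ². -/
def cell2 (n : ℕ) (a : ℤ × ℤ) : Set ℂ :=
  {z : ℂ | (a.1 : ℝ) ≤ (2 : ℝ) ^ n * z.re ∧ (2 : ℝ) ^ n * z.re < (a.1 : ℝ) + 1 ∧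
    (a.2 : ℝ) ≤ (2 : ℝ) ^ n * z.im ∧ (2 : ℝ) ^ n * z.im < (a.2 : ℝ) + 1}

/-- Entropy (base 2) of a measure on ℂ w.r.t. the level-n dyadic partition. -/
def H2 (μ : Measure ℂ) (n : ℕ) : ℝ := ∑' a : ℤ × ℤ, plog (μ (cell2 n a)).toReal

/-- Normalized entropy H_n(μ) = H(μ,D_n)/n for measures on ℂ. -/
def Hn2 (μ : Measure ℂ) (n : ℕ) : ℝ := H2 μ n / n

/-- Level-n dyadic cell of ℝ with index a ∈ ℤ. -/
def cell1 (n : ℕ) (a : ℤ) : Set ℝ :=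
  {x : ℝ | (a : ℝ) ≤ (2 : ℝ) ^ n * x ∧ (2 : ℝ) ^ n * x < (a : ℝ) + 1}

/-- Entropy (base 2) of a measure on ℝ w.r.t. the level-n dyadic partition. -/
def H1 (μ : Measure ℝ) (n : ℕ) : ℝ := ∑' a : ℤ, plog (μ (cell1 n a)).toReal

/-- Normalized entropy for measures on ℝ. -/
def Hn1 (μ : Measure ℝ) (n : ℕ) : ℝ := H1 μ n / n

/-- Orthogonal projection of the plane onto the line with unit direction w,
composed with the isometry to ℝ: z ↦ ⟨z,w⟩. -/
def projMap (w : ℂ) (z : ℂ) : ℝ := z.re * w.re + z.im * w.im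

/-- Normalized entropy of the projection π_W μ, W the line with unit direction w. -/
def projHn (w : ℂ) (μ : Measure ℂ) (m : ℕ) : ℝ := Hn1 (μ.map (projMap w)) m

/-- Unit vectors of the plane. -/
abbrev UnitVec : Type := {w : ℂ // ‖w‖ = 1}

/-- A fixed choice of direction (unit vector) of the line corresponding to the circle
point v in the squared identification ℝP¹ ≅ 𝕋: a square root of v. -/
def lineDir (v : ℂ) : ℂ := Complex.exp (Complex.log v / 2)

/-- Index of the level-n dyadic cell containing x. -/
def cellIdx (n : ℕ) (x : ℂ) : ℤ × ℤ := (⌊(2 : ℝ) ^ n * x.re⌋, ⌊(2 : ℝ) ^ n * x.im⌋)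

/-- The level-n dyadic cell D_n(x) containing x. -/
def dyadicCellOf (n : ℕ) (x : ℂ) : Set ℂ := cell2 n (cellIdx n x)

/-- The homothety T_D mapping D_n(x) onto the unit square. -/
def rescaleMap (n : ℕ) (x : ℂ) (z : ℂ) : ℂ :=
  (2 : ℂ) ^ n * z - (((cellIdx n x).1 : ℂ) + ((cellIdx n x).2 : ℂ) * Complex.I)

/-- Raw component μ_{x,n}: normalized restriction of μ to D_n(x). -/
def rawComponent (μ : Measure ℂ) (n : ℕ) (x : ℂ) : Measure ℂ :=
  (μ (dyadicCellOf n x))⁻¹ • μ.restrict (dyadicCellOf n x)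

/-- Rescaled component μ^{x,n} = T_{D_n(x)}(μ_{x,n}). -/
def rescaledComponent (μ : Measure ℂ) (n : ℕ) (x : ℂ) : Measure ℂ :=
  (rawComponent μ n x).map (rescaleMap n x)

/-- μ is exact dimensional with dimension α. -/
def ExactDim (μ : Measure ℂ) (α : ℝ) : Prop :=
  ∀ᵐ x ∂μ, Tendsto (fun r : ℝ => Real.log (μ (Metric.closedBall x r)).toReal / Real.log r)
    (𝓝[>] (0 : ℝ)) (𝓝 α)

/-- The saturation dimension satdim(μ, ε, m, k): the maximal dimension of a subspace V ≤ ℝ²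
such that the proportion (w.r.t. μ) of level-k rescaled components that are (V,ε,m)-saturated
is at least 1-ε. (A measure ν is (V,ε,m)-saturated if H_m(ν) ≥ H_m(π_{V⊥}ν) + dim V − ε;
the subspaces of ℝ² ≅ ℂ are 0, the lines span(w), and ℝ² itself, and for V = span(w) the
orthogonal complement is the line with unit direction i·w.) -/
def satdim (μ : Measure ℂ) (ε : ℝ) (m k : ℕ) : ℕ :=
  if (1 - ε : ℝ) ≤ (μ {x | 2 - ε ≤ Hn2 (rescaledComponent μ k x) m}).toReal then 2
  else if ∃ w : ℂ, ‖w‖ = 1 ∧ (1 - ε : ℝ) ≤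
      (μ {x | projHn (Complex.I * w) (rescaledComponent μ k x) m + 1 - ε ≤
        Hn2 (rescaledComponent μ k x) m}).toReal then 1
  else 0

/-- μ is (C,ρ)-Frostman on tubes: μ(B(W+x,r)) ≤ C·r^ρ for every line W+x and r>0. -/
def FrostmanOnTubes (μ : Measure ℂ) (C ρ : ℝ) : Prop :=
  ∀ w : ℂ, ‖w‖ = 1 → ∀ x : ℂ, ∀ r : ℝ, 0 < r →
    μ {z : ℂ | |((z - x) * (starRingEnd ℂ) w).im| < r} ≤ ENNReal.ofReal (C * r ^ ρ)

/-- Total variation distance between finite Borel measures on ℂ. -/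
def dTV (μ ν : Measure ℂ) : ℝ :=
  ⨆ s : {s : Set ℂ // MeasurableSet s}, |(μ s.1).toReal - (ν s.1).toReal|

/-- Conditional entropy H(μ, D_m | D_n) (base 2). -/
def condH (μ : Measure ℂ) (m n : ℕ) : ℝ :=
  ∑' a : ℤ × ℤ, (μ (cell2 n a)).toReal * H2 ((μ (cell2 n a))⁻¹ • μ.restrict (cell2 n a)) m

/-- The Fourier transform of a measure on ℂ ≅ ℝ². -/
def FT (μ : Measure ℂ) (ξ : ℂ) : ℂ :=
  ∫ z, Complex.exp (2 * Real.pi * Complex.I * ((z * (starRingEnd ℂ) ξ).re : ℂ)) ∂μ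

/-- μ ∈ 𝒟₂(σ): power Fourier decay with exponent σ. -/
def MemD2 (μ : Measure ℂ) (σ : ℝ) : Prop :=
  ∃ C : ℝ, ∀ ξ : ℂ, 1 ≤ ‖ξ‖ → ‖FT μ ξ‖ ≤ C * ‖ξ‖ ^ (-σ)

/-- ℙ is a Bernoulli measure on I^ℕ. -/
def IsBernoulli {I : Type} [Fintype I] [MeasurableSpace I] (P : Measure (ℕ → I)) : Prop :=
  IsProbabilityMeasure P ∧ ∃ q : I → ℝ, (∀ i, 0 ≤ q i) ∧ ∑ i, q i = 1 ∧
    ∀ (n : ℕ) (u : Fin n → I),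
      P {ω | ∀ j : Fin n, ω j.val = u j} = ∏ j : Fin n, ENNReal.ofReal (q (u j))

/-- ℙ is a fully supported Bernoulli measure on I^ℕ. -/
def IsFullBernoulli {I : Type} [Fintype I] [MeasurableSpace I] (P : Measure (ℕ → I)) : Prop :=
  IsProbabilityMeasure P ∧ ∃ q : I → ℝ, (∀ i, 0 < q i) ∧ ∑ i, q i = 1 ∧
    ∀ (n : ℕ) (u : Fin n → I),
      P {ω | ∀ j : Fin n, ω j.val = u j} = ∏ j : Fin n, ENNReal.ofReal (q (u j))

end SSmodel

namespace SSmodel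

/-- The (unnormalized) n-truncated k-component: the part of the n-th level decomposition of
η^(ω) consisting of the pieces f_u η^{(Tⁿω)} whose supporting ball B_u^(ω) = f_u(B(0,R)) is
contained in the dyadic cell D_k(x). -/
def truncSum {I : Type} [Fintype I] [MeasurableSpace I] (M : PlanarModel I)
    (η : (ℕ → I) → Measure ℂ) (R : ℝ) (ω : ℕ → I) (n k : ℕ) (x : ℂ) : Measure ℂ :=
  ∑ u : (j : Fin n) → Fin (M.k (ω j.val)),
    if ∀ z : ℂ, ‖z‖ ≤ R → M.lamProd ω n * z + M.finCode ω n u ∈ dyadicCellOf k x then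
      ENNReal.ofReal (∏ j : Fin n, M.p (ω j.val) (u j)) •
        ((η (shiftN n ω)).map (fun z => M.lamProd ω n * z + M.finCode ω n u))
    else 0

/-- The n-truncated k-component η^(ω)_{n,[x,k]} (normalized). -/
def truncComponent {I : Type} [Fintype I] [MeasurableSpace I] (M : PlanarModel I)
    (η : (ℕ → I) → Measure ℂ) (R : ℝ) (ω : ℕ → I) (n k : ℕ) (x : ℂ) : Measure ℂ :=
  (truncSum M η R ω n k x Set.univ)⁻¹ • truncSum M η R ω n k x

end SSmodel

open SSmodel SSmodel.PlanarModel

namespace SSmodel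

open scoped Function

lemma plog_zero : plog 0 = 0 := by simp [plog]

lemma plog_nonneg {t : ℝ} (h0 : 0 ≤ t) (h1 : t ≤ 1) : 0 ≤ plog t := by
  rcases eq_or_lt_of_le h0 with h | h
  · simp [plog, ← h]
  · have : Real.logb 2 t ≤ 0 := Real.logb_nonpos (by norm_num) h0 h1
    have := mul_nonpos_of_nonneg_of_nonpos h0 this
    simpa [plog] using neg_nonneg.mpr this

lemma plog_sum_le_sum_plog {β : Type*} (s : Finset β) (x : β → ℝ)
    (hx : ∀ b ∈ s, 0 ≤ x b) : plog (∑ b ∈ s, x b) ≤ ∑ b ∈ s, plog (x b) := by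
  classical
  have hs : 0 ≤ ∑ b ∈ s, x b := Finset.sum_nonneg hx
  rcases eq_or_lt_of_le hs with h | h
  · have : ∀ b ∈ s, x b = 0 := by
      intro b hb
      exact le_antisymm (by
        have := (Finset.sum_eq_zero_iff_of_nonneg hx).mp h.symm
        exact le_of_eq (this b hb)) (hx b hb)
    calc plog (∑ b ∈ s, x b) = 0 := by rw [← h, plog_zero]
      _ ≤ ∑ b ∈ s, plog (x b) :=
        Finset.sum_nonneg (fun b hb => le_of_eq (by rw [this b hb, plog_zero]))
  · -- plog (Σ) = Σ_b x b * (-logb 2 Σ) ≤ Σ plog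
    have : plog (∑ b ∈ s, x b) = ∑ b ∈ s, -(x b * Real.logb 2 (∑ c ∈ s, x c)) := by
      rw [plog, Finset.sum_mul, ← Finset.sum_neg_distrib]
    rw [this]
    apply Finset.sum_le_sum
    intro b hb
    rcases eq_or_lt_of_le (hx b hb) with h0 | h0
    · simp [plog, ← h0]
    · have hle : x b ≤ ∑ c ∈ s, x c := Finset.single_le_sum hx hb
      have : Real.logb 2 (x b) ≤ Real.logb 2 (∑ c ∈ s, x c) :=
        (Real.logb_le_logb (by norm_num) h0 (lt_of_lt_of_le h0 hle)).mpr hle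
      have := mul_le_mul_of_nonneg_left this (le_of_lt h0)
      simpa [plog] using neg_le_neg this

lemma sum_plog_le {β : Type*} (s : Finset β) (x : β → ℝ)
    (hx : ∀ b ∈ s, 0 ≤ x b) (N : ℝ) (hN1 : 1 ≤ N)
    (hcard : ((s.filter fun b => x b ≠ 0).card : ℝ) ≤ N) :
    ∑ b ∈ s, plog (x b) ≤ plog (∑ b ∈ s, x b) + (∑ b ∈ s, x b) * Real.logb 2 N := by
  classical
  set s' := s.filter fun b => x b ≠ 0 with hs'
  have hsum : ∑ b ∈ s, x b = ∑ b ∈ s', x b := by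
    rw [hs', Finset.sum_filter_ne_zero]
  have hsum_pl : ∑ b ∈ s, plog (x b) = ∑ b ∈ s', plog (x b) := by
    rw [hs']
    exact (Finset.sum_filter_of_ne (fun b hb h => by
      intro hx0; exact h (by rw [hx0, plog_zero]) )).symm
  rw [hsum, hsum_pl]
  rcases Finset.eq_empty_or_nonempty s' with he | hne
  · simp [he, plog_zero]
  · have hpos : ∀ b ∈ s', 0 < x b := by
      intro b hb
      rcases Finset.mem_filter.mp hb with ⟨hbs, hb0⟩
      exact lt_of_le_of_ne (hx b hbs) (Ne.symm hb0)
    set t := ∑ b ∈ s', x b with ht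
    have ht0 : 0 < t := Finset.sum_pos hpos hne
    have hN0 : (0:ℝ) < N := lt_of_lt_of_le one_pos hN1
    have hlog2 : (0:ℝ) < Real.log 2 := Real.log_pos (by norm_num)
    have hterm : ∀ b ∈ s',
        (plog (x b) + x b * Real.logb 2 t - x b * Real.logb 2 N) ≤ (t / N - x b) / Real.log 2 := by
      intro b hb
      have hxb := hpos b hb
      have harg : 0 < t / (x b * N) := by positivity
      have hlogle : Real.log (t / (x b * N)) ≤ t / (x b * N) - 1 :=
        Real.log_le_sub_one_of_pos harg
      have hexp : plog (x b) + x b * Real.logb 2 t - x b * Real.logb 2 N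
          = x b * (Real.log (t/(x b * N)) / Real.log 2) := by
        rw [Real.log_div (ne_of_gt ht0) (by positivity),
          Real.log_mul (ne_of_gt hxb) (ne_of_gt hN0)]
        simp only [plog, Real.logb]
        field_simp
        ring
      rw [hexp]
      calc x b * (Real.log (t/(x b*N)) / Real.log 2)
          ≤ x b * ((t/(x b*N) - 1)/Real.log 2) := by gcongr
        _ = (t/N - x b)/Real.log 2 := by field_simp
    have main : ∑ b ∈ s', (plog (x b) + x b * Real.logb 2 t - x b * Real.logb 2 N)
        ≤ ((s'.card : ℝ) * (t/N) - t) / Real.log 2 := by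
      calc ∑ b ∈ s', (plog (x b) + x b * Real.logb 2 t - x b * Real.logb 2 N)
          ≤ ∑ b ∈ s', (t / N - x b) / Real.log 2 := Finset.sum_le_sum hterm
        _ = ((s'.card : ℝ) * (t/N) - t) / Real.log 2 := by
            rw [← Finset.sum_div, Finset.sum_sub_distrib, Finset.sum_const, nsmul_eq_mul]
    have hnonpos : ((s'.card : ℝ) * (t/N) - t) / Real.log 2 ≤ 0 := by
      apply div_nonpos_of_nonpos_of_nonneg _ (le_of_lt hlog2)
      have : (s'.card : ℝ) * (t/N) ≤ N * (t/N) := by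
        apply mul_le_mul_of_nonneg_right hcard (by positivity)
      have h2 : N * (t/N) = t := by field_simp
      linarith
    have expand : ∑ b ∈ s', (plog (x b) + x b * Real.logb 2 t - x b * Real.logb 2 N)
        = (∑ b ∈ s', plog (x b)) + t * Real.logb 2 t - t * Real.logb 2 N := by
      rw [Finset.sum_sub_distrib, Finset.sum_add_distrib, ← Finset.sum_mul, ← Finset.sum_mul]
    have hplogt : plog t = -(t * Real.logb 2 t) := rfl
    rw [expand] at main
    have := le_trans main hnonpos
    rw [hplogt]
    linarith





lemma mem_cell2_iff {m : ℕ} {a : ℤ × ℤ} {z : ℂ} : z ∈ cell2 m a ↔ cellIdx m z = a := by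
  simp only [cell2, cellIdx, Set.mem_setOf_eq, Prod.ext_iff, Int.floor_eq_iff]
  tauto

lemma mem_cell1_iff {m : ℕ} {b : ℤ} {x : ℝ} : x ∈ cell1 m b ↔ ⌊(2:ℝ)^m * x⌋ = b := by
  simp only [cell1, Set.mem_setOf_eq, Int.floor_eq_iff]

lemma mem_own_cell2 (m : ℕ) (z : ℂ) : z ∈ cell2 m (cellIdx m z) := mem_cell2_iff.mpr rfl

lemma cell2_disjoint {m : ℕ} : Pairwise (Disjoint on fun a : ℤ × ℤ => cell2 m a) := by
  intro a a' hne
  simp only [Function.onFun, Set.disjoint_left]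
  intro z hz hz'
  exact hne ((mem_cell2_iff.mp hz).symm.trans (mem_cell2_iff.mp hz'))

lemma cell1_disjoint {m : ℕ} : Pairwise (Disjoint on fun b : ℤ => cell1 m b) := by
  intro b b' hne
  simp only [Function.onFun, Set.disjoint_left]
  intro x hx hx'
  exact hne ((mem_cell1_iff.mp hx).symm.trans (mem_cell1_iff.mp hx'))

lemma iUnion_cell2 (m : ℕ) : (⋃ a : ℤ × ℤ, cell2 m a) = Set.univ := by
  ext z
  simp only [Set.mem_iUnion, Set.mem_univ, iff_true]
  exact ⟨cellIdx m z, mem_own_cell2 m z⟩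

lemma iUnion_cell1 (m : ℕ) : (⋃ b : ℤ, cell1 m b) = Set.univ := by
  ext x
  simp only [Set.mem_iUnion, Set.mem_univ, iff_true]
  exact ⟨⌊(2:ℝ)^m * x⌋, mem_cell1_iff.mpr rfl⟩

lemma measurableSet_cell2 {m : ℕ} {a : ℤ × ℤ} : MeasurableSet (cell2 m a) := by
  have h1 : Measurable fun z : ℂ => (2:ℝ)^m * z.re :=
    (measurable_const.mul Complex.measurable_re)
  have h2 : Measurable fun z : ℂ => (2:ℝ)^m * z.im :=
    (measurable_const.mul Complex.measurable_im)
  have : cell2 m a = ((fun z : ℂ => (2:ℝ)^m * z.re) ⁻¹' (Set.Ico (a.1:ℝ) ((a.1:ℝ)+1))) ∩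
      ((fun z : ℂ => (2:ℝ)^m * z.im) ⁻¹' (Set.Ico (a.2:ℝ) ((a.2:ℝ)+1))) := by
    ext z; simp only [cell2, Set.mem_setOf_eq, Set.mem_inter_iff, Set.mem_preimage,
      Set.mem_Ico]; tauto
  rw [this]
  exact (h1 measurableSet_Ico).inter (h2 measurableSet_Ico)

lemma measurableSet_cell1 {m : ℕ} {b : ℤ} : MeasurableSet (cell1 m b) := by
  have h1 : Measurable fun x : ℝ => (2:ℝ)^m * x := measurable_const.mul measurable_id
  have : cell1 m b = (fun x : ℝ => (2:ℝ)^m * x) ⁻¹' (Set.Ico (b:ℝ) ((b:ℝ)+1)) := by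
    ext x; simp only [cell1, Set.mem_setOf_eq, Set.mem_preimage, Set.mem_Ico]
  rw [this]
  exact h1 measurableSet_Ico

lemma sub_le_inv_aux {c u v lo : ℝ} (hc : 0 < c) (hu : lo ≤ c * u) (hv : c * v < lo + 1) :
    v - u ≤ c⁻¹ := by
  rw [← mul_le_mul_iff_right₀ hc, mul_sub, mul_inv_cancel₀ (ne_of_gt hc)]
  linarith

lemma cell2_diam {m : ℕ} {a : ℤ × ℤ} {z z' : ℂ} (hz : z ∈ cell2 m a) (hz' : z' ∈ cell2 m a) :
    ‖z - z'‖ ≤ 2 * ((2:ℝ)^m)⁻¹ := by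
  obtain ⟨h1, h2, h3, h4⟩ := hz
  obtain ⟨h1', h2', h3', h4'⟩ := hz'
  have hp : (0:ℝ) < (2:ℝ)^m := by positivity
  have hre : |(z - z').re| ≤ ((2:ℝ)^m)⁻¹ := by
    rw [Complex.sub_re, abs_le]
    constructor
    · have := sub_le_inv_aux hp h1 h2'
      linarith
    · have := sub_le_inv_aux hp h1' h2
      linarith
  have him : |(z - z').im| ≤ ((2:ℝ)^m)⁻¹ := by
    rw [Complex.sub_im, abs_le]
    constructor
    · have := sub_le_inv_aux hp h3 h4'
      linarith
    · have := sub_le_inv_aux hp h3' h4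
      linarith
  calc ‖z - z'‖ ≤ |(z - z').re| + |(z - z').im| :=
        Complex.norm_le_abs_re_add_abs_im _
    _ ≤ ((2:ℝ)^m)⁻¹ + ((2:ℝ)^m)⁻¹ := add_le_add hre him
    _ = 2 * ((2:ℝ)^m)⁻¹ := by ring




lemma toReal_prob_le_one (μ : Measure ℂ) [IsProbabilityMeasure μ] (s : Set ℂ) :
    (μ s).toReal ≤ 1 := by
  have h := prob_le_one (μ := μ) (s := s)
  have := ENNReal.toReal_mono (by simp) h
  simpa using this

lemma H2_nonneg (μ : Measure ℂ) [IsProbabilityMeasure μ] (m : ℕ) : 0 ≤ H2 μ m :=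
  tsum_nonneg fun a => plog_nonneg ENNReal.toReal_nonneg (toReal_prob_le_one μ _)

lemma measurable_cellIdx (m : ℕ) : Measurable (cellIdx m) := by
  apply Measurable.prod
  · exact Int.measurable_floor.comp (measurable_const.mul Complex.measurable_re)
  · exact Int.measurable_floor.comp (measurable_const.mul Complex.measurable_im)

/-- Off a suitable finite window, dyadic cells are null. -/
lemma cell2_null_outside (μ : Measure ℂ) (R₀ : ℝ)
    (hsupp : μ (Metric.closedBall 0 R₀)ᶜ = 0) (m : ℕ) (a : ℤ × ℤ)
    (ha : a ∉ (Finset.Icc (-(⌈(2:ℝ)^m * R₀⌉+1)) (⌈(2:ℝ)^m * R₀⌉+1)) ×ˢ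
      (Finset.Icc (-(⌈(2:ℝ)^m * R₀⌉+1)) (⌈(2:ℝ)^m * R₀⌉+1))) :
    μ (cell2 m a) = 0 := by
  set L : ℤ := ⌈(2:ℝ)^m * R₀⌉ + 1 with hL
  apply measure_mono_null _ hsupp
  intro z hz
  simp only [Set.mem_compl_iff, Metric.mem_closedBall, not_le]
  by_contra hle
  push_neg at hle
  apply ha
  obtain ⟨h1, h2, h3, h4⟩ := hz
  have hzre : |z.re| ≤ R₀ := by
    calc |z.re| ≤ ‖z‖ := Complex.abs_re_le_norm z
      _ = dist z 0 := by rw [Complex.dist_eq, sub_zero]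
      _ ≤ R₀ := hle
  have hzim : |z.im| ≤ R₀ := by
    calc |z.im| ≤ ‖z‖ := Complex.abs_im_le_norm z
      _ = dist z 0 := by rw [Complex.dist_eq, sub_zero]
      _ ≤ R₀ := hle
  have hp : (0:ℝ) < (2:ℝ)^m := by positivity
  have hceil : (2:ℝ)^m * R₀ ≤ ((L:ℝ)) := by
    rw [hL]
    push_cast
    have := Int.le_ceil ((2:ℝ)^m * R₀)
    linarith
  rw [Finset.mem_product]
  constructor
  · rw [Finset.mem_Icc]
    constructor
    · -- -L ≤ a.1
      have : -(L:ℝ) - 1 < (a.1:ℝ) := by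
        have hlow : -((2:ℝ)^m * R₀) ≤ (2:ℝ)^m * z.re := by
          have : -R₀ ≤ z.re := neg_le_of_abs_le hzre
          nlinarith
        linarith
      have : -L - 1 < a.1 := by exact_mod_cast this
      omega
    · have : (a.1:ℝ) ≤ (L:ℝ) := by
        have hup : (2:ℝ)^m * z.re ≤ (2:ℝ)^m * R₀ := by
          have : z.re ≤ R₀ := le_of_abs_le hzre
          nlinarith
        linarith
      exact_mod_cast this
  · rw [Finset.mem_Icc]
    constructor
    · have : -(L:ℝ) - 1 < (a.2:ℝ) := by
        have hlow : -((2:ℝ)^m * R₀) ≤ (2:ℝ)^m * z.im := by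
          have : -R₀ ≤ z.im := neg_le_of_abs_le hzim
          nlinarith
        linarith
      have : -L - 1 < a.2 := by exact_mod_cast this
      omega
    · have : (a.2:ℝ) ≤ (L:ℝ) := by
        have hup : (2:ℝ)^m * z.im ≤ (2:ℝ)^m * R₀ := by
          have : z.im ≤ R₀ := le_of_abs_le hzim
          nlinarith
        linarith
      exact_mod_cast this


lemma lintegral_cell_entropy (μ : Measure ℂ) [IsProbabilityMeasure μ] (m : ℕ) (q : ℝ)
    (hq : 0 ≤ q) (FA : Finset (ℤ × ℤ)) (hFA : ∀ a ∉ FA, μ (cell2 m a) = 0) :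
    ∫⁻ x, ENNReal.ofReal (q * -(Real.logb 2 (μ (dyadicCellOf m x)).toReal)) ∂μ
      = ENNReal.ofReal (q * H2 μ m) := by
  have hH2 : H2 μ m = ∑ a ∈ FA, plog (μ (cell2 m a)).toReal := by
    apply tsum_eq_sum
    intro a ha
    rw [hFA a ha]
    simp [plog_zero]
  have hsplit : ∫⁻ x, ENNReal.ofReal (q * -(Real.logb 2 (μ (dyadicCellOf m x)).toReal)) ∂μ
      = ∑' a : ℤ × ℤ,
        ENNReal.ofReal (q * -(Real.logb 2 (μ (cell2 m a)).toReal)) * μ (cell2 m a) := by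
    rw [← setLIntegral_univ, ← iUnion_cell2 m,
      lintegral_iUnion (fun _ => measurableSet_cell2) cell2_disjoint]
    congr 1
    ext a
    rw [setLIntegral_congr_fun measurableSet_cell2 (fun x hx => ?_),
      setLIntegral_const]
    have : cellIdx m x = a := mem_cell2_iff.mp hx
    rw [dyadicCellOf, this]
  rw [hsplit]
  have hterm : ∀ a : ℤ × ℤ,
      ENNReal.ofReal (q * -(Real.logb 2 (μ (cell2 m a)).toReal)) * μ (cell2 m a)
        = ENNReal.ofReal (q * plog (μ (cell2 m a)).toReal) := by
    intro a
    set t := (μ (cell2 m a)).toReal with htdef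
    have ht0 : 0 ≤ t := ENNReal.toReal_nonneg
    have ht1 : t ≤ 1 := toReal_prob_le_one μ _
    have hlogb : 0 ≤ -(Real.logb 2 t) := by
      have := Real.logb_nonpos (b := 2) (by norm_num) ht0 ht1
      linarith
    have hμ : μ (cell2 m a) = ENNReal.ofReal t :=
      (ENNReal.ofReal_toReal (measure_ne_top μ _)).symm
    rw [hμ, ← ENNReal.ofReal_mul (by positivity)]
    congr 1
    simp only [plog]
    ring
  rw [tsum_congr hterm]
  rw [tsum_eq_sum (s := FA) (fun a ha => by rw [hFA a ha]; simp [plog_zero])]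
  rw [← ENNReal.ofReal_sum_of_nonneg (fun a _ => by
    have : 0 ≤ plog (μ (cell2 m a)).toReal :=
      plog_nonneg ENNReal.toReal_nonneg (toReal_prob_le_one μ _)
    positivity)]
  rw [hH2, Finset.mul_sum]

lemma eventually_hn2_ge (μ : Measure ℂ) [IsProbabilityMeasure μ] {R₀ α : ℝ}
    (hsupp : μ (Metric.closedBall 0 R₀)ᶜ = 0)
    (hdim : ExactDim μ α) {ε : ℝ} (hε : 0 < ε) :
    ∀ᶠ m : ℕ in atTop, α - ε ≤ Hn2 μ m := by
  rcases le_or_gt (α - ε) 0 with hcase | hcase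
  · filter_upwards with m
    have h2 : 0 ≤ Hn2 μ m := div_nonneg (H2_nonneg μ m) (Nat.cast_nonneg m)
    linarith
  · have hα2 : 0 < α - ε/2 := by linarith
    -- the family of functions
    set G : ℕ → ℂ → ℝ≥0∞ := fun m x =>
      ENNReal.ofReal ((m:ℝ)⁻¹ * -(Real.logb 2 (μ (dyadicCellOf m x)).toReal)) with hG
    have hGmeas : ∀ m, Measurable (G m) := by
      intro m
      have : G m = (fun a : ℤ × ℤ =>
          ENNReal.ofReal ((m:ℝ)⁻¹ * -(Real.logb 2 (μ (cell2 m a)).toReal))) ∘ (cellIdx m) :=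
        rfl
      rw [this]
      exact (measurable_of_countable _).comp (measurable_cellIdx m)
    -- a.e. pointwise liminf bound
    have hnull : ∀ m : ℕ, μ {x | μ (dyadicCellOf m x) = 0} = 0 := by
      intro m
      apply measure_mono_null
        (t := ⋃ a : {a : ℤ × ℤ // μ (cell2 m a) = 0}, cell2 m a.1)
      · intro x hx
        exact Set.mem_iUnion.mpr ⟨⟨cellIdx m x, hx⟩, mem_own_cell2 m x⟩
      · exact measure_iUnion_null fun a => a.2
    have hae : ∀ᵐ x ∂μ, (∀ m : ℕ, μ (dyadicCellOf m x) ≠ 0) := by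
      rw [ae_all_iff]
      intro m
      rw [ae_iff]
      simpa using hnull m
    have hpt : ∀ᵐ x ∂μ, ENNReal.ofReal (α - ε/2) ≤ liminf (fun m => G m x) atTop := by
      filter_upwards [hdim, hae] with x hx1 hx2
      -- radii
      set r : ℕ → ℝ := fun m => 2 * ((2:ℝ)^m)⁻¹ with hr
      have hrpos : ∀ m, 0 < r m := fun m => by positivity
      have hrt : Tendsto r atTop (𝓝[>] (0:ℝ)) := by
        apply tendsto_nhdsWithin_of_tendsto_nhds_of_eventually_within
        · have h0 : Tendsto (fun m : ℕ => ((2:ℝ)⁻¹)^m) atTop (𝓝 0) :=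
            tendsto_pow_atTop_nhds_zero_of_lt_one (by norm_num) (by norm_num)
          have := h0.const_mul (2:ℝ)
          simpa [hr, inv_pow, mul_zero] using this
        · exact Eventually.of_forall fun m => hrpos m
      have hs := hx1.comp hrt
      have hfrac : Tendsto (fun m : ℕ => 1 - (m:ℝ)⁻¹) atTop (𝓝 1) := by
        have := tendsto_const_nhds (x := (1:ℝ)) (f := atTop (α := ℕ))
        have h := this.sub tendsto_inv_atTop_nhds_zero_nat
        simpa using h
      have hprod : Tendsto (fun m : ℕ =>
          (Real.log (μ (Metric.closedBall x (r m))).toReal / Real.log (r m)) * (1 - (m:ℝ)⁻¹))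
          atTop (𝓝 (α * 1)) := hs.mul hfrac
      rw [mul_one] at hprod
      have hev : ∀ᶠ m : ℕ in atTop, α - ε/2 <
          (Real.log (μ (Metric.closedBall x (r m))).toReal / Real.log (r m)) * (1 - (m:ℝ)⁻¹) :=
        hprod.eventually (eventually_gt_nhds (by linarith))
      have hbound : ∀ᶠ m : ℕ in atTop, ENNReal.ofReal (α - ε/2) ≤ G m x := by
        filter_upwards [hev, eventually_ge_atTop 2] with m hm hm2
        set t := (μ (dyadicCellOf m x)).toReal with htdef
        set B := (μ (Metric.closedBall x (r m))).toReal with hBdef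
        have ht0 : 0 < t := ENNReal.toReal_pos (hx2 m) (measure_ne_top μ _)
        have hsub : dyadicCellOf m x ⊆ Metric.closedBall x (r m) := by
          intro z hz
          rw [Metric.mem_closedBall, Complex.dist_eq]
          exact cell2_diam hz (mem_own_cell2 m x)
        have htB : t ≤ B := ENNReal.toReal_mono (measure_ne_top μ _) (measure_mono hsub)
        have hB0 : 0 < B := lt_of_lt_of_le ht0 htB
        have hB1 : B ≤ 1 := toReal_prob_le_one μ _
        have hmR : (2:ℝ) ≤ (m:ℝ) := by exact_mod_cast hm2
        have hm0 : (m:ℝ) ≠ 0 := by linarith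
        have hlog2 : (0:ℝ) < Real.log 2 := Real.log_pos (by norm_num)
        have hlogr : Real.log (r m) = (1 - (m:ℝ)) * Real.log 2 := by
          rw [hr]
          rw [Real.log_mul (by norm_num) (by positivity), Real.log_inv, Real.log_pow]
          ring
        have h1m : (1:ℝ) - (m:ℝ) ≠ 0 := by linarith
        have hident : (Real.log B / Real.log (r m)) * (1 - (m:ℝ)⁻¹)
            = (m:ℝ)⁻¹ * -(Real.logb 2 B) := by
          rw [hlogr, Real.logb]
          field_simp
          ring
        have hlogb : -(Real.logb 2 B) ≤ -(Real.logb 2 t) := by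
          have := (Real.logb_le_logb (b := 2) (by norm_num) ht0 hB0).mpr htB
          linarith
        have hle : α - ε/2 ≤ (m:ℝ)⁻¹ * -(Real.logb 2 t) := by
          have h1 : α - ε/2 < (m:ℝ)⁻¹ * -(Real.logb 2 B) := by
            rw [← hident]; exact hm
          have h2 : (m:ℝ)⁻¹ * -(Real.logb 2 B) ≤ (m:ℝ)⁻¹ * -(Real.logb 2 t) := by
            apply mul_le_mul_of_nonneg_left hlogb (by positivity)
          linarith
        exact ENNReal.ofReal_le_ofReal hle
      calc ENNReal.ofReal (α - ε/2)
          = liminf (fun _ : ℕ => ENNReal.ofReal (α - ε/2)) atTop := (liminf_const _).symm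
        _ ≤ liminf (fun m => G m x) atTop := liminf_le_liminf hbound
    -- integrate
    have hliminf : ENNReal.ofReal (α - ε/2)
        ≤ liminf (fun m => ∫⁻ x, G m x ∂μ) atTop := by
      calc ENNReal.ofReal (α - ε/2)
          = ∫⁻ _x, ENNReal.ofReal (α - ε/2) ∂μ := by
            rw [lintegral_const, measure_univ, mul_one]
        _ ≤ ∫⁻ x, liminf (fun m => G m x) atTop ∂μ := lintegral_mono_ae hpt
        _ ≤ liminf (fun m => ∫⁻ x, G m x ∂μ) atTop := lintegral_liminf_le hGmeas
    have hint : ∀ m : ℕ, ∫⁻ x, G m x ∂μ = ENNReal.ofReal ((m:ℝ)⁻¹ * H2 μ m) := by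
      intro m
      exact lintegral_cell_entropy μ m ((m:ℝ)⁻¹) (by positivity) _
        (cell2_null_outside μ R₀ hsupp m)
    rw [funext hint] at hliminf
    have hlt : ENNReal.ofReal (α - ε) < ENNReal.ofReal (α - ε/2) :=
      (ENNReal.ofReal_lt_ofReal_iff hα2).mpr (by linarith)
    have hev2 : ∀ᶠ m : ℕ in atTop,
        ENNReal.ofReal (α - ε) < ENNReal.ofReal ((m:ℝ)⁻¹ * H2 μ m) :=
      eventually_lt_of_lt_liminf (lt_of_lt_of_le hlt hliminf)
    filter_upwards [hev2] with m hm
    have := (ENNReal.ofReal_lt_ofReal_iff_of_nonneg (le_of_lt hcase)).mp hm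
    rw [Hn2, div_eq_mul_inv, mul_comm]
    linarith



lemma measurable_projMap (w : ℂ) : Measurable (projMap w) :=
  (Complex.measurable_re.mul measurable_const).add (Complex.measurable_im.mul measurable_const)

lemma abs_projMap_le (w z : ℂ) : |projMap w z| ≤ ‖z‖ * ‖w‖ := by
  have h : projMap w z = (z * (starRingEnd ℂ) w).re := by
    simp only [projMap, Complex.mul_re, Complex.conj_re, Complex.conj_im]
    ring
  rw [h]
  calc |(z * (starRingEnd ℂ) w).re| ≤ ‖z * (starRingEnd ℂ) w‖ :=
        Complex.abs_re_le_norm _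
    _ = ‖z‖ * ‖w‖ := by rw [norm_mul, Complex.norm_conj]

/-- Counting lattice points in a strip. -/
lemma strip_count (w : ℂ) (hw : ‖w‖ = 1) {R₀ : ℝ} (hR : 1 ≤ R₀) (m : ℕ) (b : ℤ)
    {L : ℤ} (hL : (L:ℝ) ≤ (2:ℝ)^m * R₀ + 2) (hL0 : 0 ≤ L)
    (s : Finset (ℤ × ℤ))
    (hP : ∀ a ∈ s, a.1 ∈ Finset.Icc (-L) L ∧ a.2 ∈ Finset.Icc (-L) L ∧
        |(a.1:ℝ) * w.re + (a.2:ℝ) * w.im - (b:ℝ)| ≤ 3) :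
    (s.card : ℝ) ≤ 3375 * R₀ * 2 ^ m := by
  classical
  have hwre : |w.re| ≤ 1 := by
    have := Complex.abs_re_le_norm w; rw [hw] at this; exact this
  have hwim : |w.im| ≤ 1 := by
    have := Complex.abs_im_le_norm w; rw [hw] at this; exact this
  have hww : w.re^2 + w.im^2 = 1 := by
    have h1 : ‖w‖^2 = Complex.normSq w := Complex.sq_norm w
    rw [hw] at h1
    rw [Complex.normSq_apply] at h1
    nlinarith [h1]
  set f : ℤ × ℤ → ℤ := fun a => ⌊(a.1:ℝ) * (-w.im) + (a.2:ℝ) * w.re⌋ with hf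
  set t : Finset ℤ := Finset.Icc (-(2*L+1)) (2*L+1) with ht
  have hmem : ∀ a ∈ s, f a ∈ t := by
    intro a ha
    obtain ⟨h1, h2, _⟩ := hP a ha
    rw [Finset.mem_Icc] at h1 h2
    have ha1 : |(a.1:ℝ)| ≤ (L:ℝ) := by
      rw [abs_le]; constructor <;> [exact_mod_cast h1.1; exact_mod_cast h1.2]
    have ha2 : |(a.2:ℝ)| ≤ (L:ℝ) := by
      rw [abs_le]; constructor <;> [exact_mod_cast h2.1; exact_mod_cast h2.2]
    have hv : |(a.1:ℝ) * (-w.im) + (a.2:ℝ) * w.re| ≤ 2*(L:ℝ) := by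
      calc |(a.1:ℝ) * (-w.im) + (a.2:ℝ) * w.re|
          ≤ |(a.1:ℝ) * (-w.im)| + |(a.2:ℝ) * w.re| := abs_add_le _ _
        _ = |(a.1:ℝ)| * |w.im| + |(a.2:ℝ)| * |w.re| := by rw [abs_mul, abs_mul, abs_neg]
        _ ≤ (L:ℝ) * 1 + (L:ℝ) * 1 := by
            apply add_le_add <;> apply mul_le_mul <;>
              first | assumption | positivity | exact abs_nonneg _
        _ = 2*(L:ℝ) := by ring
    rw [ht, Finset.mem_Icc]
    rw [abs_le] at hv
    constructor
    · rw [Int.le_floor]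
      push_cast
      linarith [hv.1]
    · have hfl := Int.floor_le ((a.1:ℝ) * (-w.im) + (a.2:ℝ) * w.re)
      have hfr : ((f a : ℤ):ℝ) ≤ ((2*L + 1 : ℤ):ℝ) := by
        rw [hf]; dsimp only; push_cast; linarith [hv.2]
      exact_mod_cast hfr
  have hfiber : ∀ c ∈ t, ((s.filter (fun a => f a = c)).card : ℝ) ≤ 225 := by
    intro c _
    rcases Finset.eq_empty_or_nonempty (s.filter (fun a => f a = c)) with he | ⟨a₀, ha₀⟩
    · rw [he]; norm_num
    · have ha₀s : a₀ ∈ s := (Finset.mem_filter.mp ha₀).1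
      have ha₀f : f a₀ = c := (Finset.mem_filter.mp ha₀).2
      have hsub : s.filter (fun a => f a = c) ⊆
          Finset.Icc (a₀.1 - 7) (a₀.1 + 7) ×ˢ Finset.Icc (a₀.2 - 7) (a₀.2 + 7) := by
        intro a ha
        have has : a ∈ s := (Finset.mem_filter.mp ha).1
        have haf : f a = c := (Finset.mem_filter.mp ha).2
        obtain ⟨_, _, hP1⟩ := hP a has
        obtain ⟨_, _, hP0⟩ := hP a₀ ha₀s
        set d1 : ℝ := (a.1:ℝ) - (a₀.1:ℝ) with hd1
        set d2 : ℝ := (a.2:ℝ) - (a₀.2:ℝ) with hd2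
        set p : ℝ := d1 * w.re + d2 * w.im with hp
        set q : ℝ := d1 * (-w.im) + d2 * w.re with hq
        have hpb : |p| ≤ 6 := by
          have : p = ((a.1:ℝ) * w.re + (a.2:ℝ) * w.im - (b:ℝ))
              - ((a₀.1:ℝ) * w.re + (a₀.2:ℝ) * w.im - (b:ℝ)) := by rw [hp, hd1, hd2]; ring
          rw [this]
          calc |_ - _| ≤ |_| + |_| := abs_sub _ _
            _ ≤ 3 + 3 := add_le_add hP1 hP0
            _ = 6 := by norm_num
        have hqb : |q| ≤ 1 := by
          have hfa := Int.floor_eq_iff.mp haf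
          have hfa₀ := Int.floor_eq_iff.mp ha₀f
          have : q = ((a.1:ℝ) * (-w.im) + (a.2:ℝ) * w.re)
              - ((a₀.1:ℝ) * (-w.im) + (a₀.2:ℝ) * w.re) := by rw [hq, hd1, hd2]; ring
          rw [this, abs_le]
          constructor <;> [linarith [hfa.1, hfa.2, hfa₀.1, hfa₀.2];
            linarith [hfa.1, hfa.2, hfa₀.1, hfa₀.2]]
        have hid1 : d1 = p * w.re - q * w.im := by
          rw [hp, hq]; linear_combination (-d1) * hww
        have hid2 : d2 = p * w.im + q * w.re := by
          rw [hp, hq]; linear_combination (-d2) * hww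
        have hb1 : |d1| ≤ 7 := by
          rw [hid1]
          calc |p * w.re - q * w.im| ≤ |p * w.re| + |q * w.im| := abs_sub _ _
            _ = |p| * |w.re| + |q| * |w.im| := by rw [abs_mul, abs_mul]
            _ ≤ 6 * 1 + 1 * 1 := by
                apply add_le_add <;> apply mul_le_mul <;>
                  first | assumption | positivity | exact abs_nonneg _
            _ = 7 := by norm_num
        have hb2 : |d2| ≤ 7 := by
          rw [hid2]
          calc |p * w.im + q * w.re| ≤ |p * w.im| + |q * w.re| := abs_add_le _ _
            _ = |p| * |w.im| + |q| * |w.re| := by rw [abs_mul, abs_mul]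
            _ ≤ 6 * 1 + 1 * 1 := by
                apply add_le_add <;> apply mul_le_mul <;>
                  first | assumption | positivity | exact abs_nonneg _
            _ = 7 := by norm_num
        have hi1 : |a.1 - a₀.1| ≤ 7 := by
          have : |((a.1 - a₀.1 : ℤ) : ℝ)| ≤ 7 := by push_cast; exact hb1
          exact_mod_cast (by rwa [← Int.cast_abs] at this : ((|a.1 - a₀.1| : ℤ) : ℝ) ≤ 7)
        have hi2 : |a.2 - a₀.2| ≤ 7 := by
          have : |((a.2 - a₀.2 : ℤ) : ℝ)| ≤ 7 := by push_cast; exact hb2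
          exact_mod_cast (by rwa [← Int.cast_abs] at this : ((|a.2 - a₀.2| : ℤ) : ℝ) ≤ 7)
        rw [Finset.mem_product, Finset.mem_Icc, Finset.mem_Icc]
        rw [abs_le] at hi1 hi2
        omega
      have := Finset.card_le_card hsub
      have hcard : (Finset.Icc (a₀.1 - 7) (a₀.1 + 7) ×ˢ
          Finset.Icc (a₀.2 - 7) (a₀.2 + 7)).card = 225 := by
        have e1 : a₀.1 + 7 + 1 - (a₀.1 - 7) = 15 := by ring
        have e2 : a₀.2 + 7 + 1 - (a₀.2 - 7) = 15 := by ring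
        rw [Finset.card_product, Int.card_Icc, Int.card_Icc, e1, e2]
        rfl
      rw [hcard] at this
      exact_mod_cast this
  have hcards : s.card = ∑ c ∈ t, (s.filter (fun a => f a = c)).card :=
    Finset.card_eq_sum_card_fiberwise hmem
  have htcard : (t.card : ℝ) ≤ 4*(L:ℝ) + 3 := by
    rw [ht, Int.card_Icc]
    have h1 : (2*L+1) + 1 - (-(2*L+1)) = 4*L + 3 := by ring
    rw [h1]
    have h0 : (((4*L+3).toNat : ℤ)) = 4*L+3 := Int.toNat_of_nonneg (by omega)
    have h2 : (((4*L+3).toNat : ℕ) : ℝ) = (((4*L+3).toNat : ℤ) : ℝ) := by push_cast; ring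
    rw [h2, h0]
    push_cast
    linarith
  have : (s.card : ℝ) ≤ (t.card : ℝ) * 225 := by
    rw [hcards]
    push_cast
    calc (∑ c ∈ t, ((s.filter (fun a => f a = c)).card : ℝ))
        ≤ ∑ _c ∈ t, (225:ℝ) := Finset.sum_le_sum hfiber
      _ = (t.card : ℝ) * 225 := by rw [Finset.sum_const, nsmul_eq_mul]
  have hp2 : (0:ℝ) < 2^m := by positivity
  have h2m : (1:ℝ) ≤ 2^m := one_le_pow₀ (by norm_num)
  calc (s.card : ℝ) ≤ (t.card : ℝ) * 225 := this
    _ ≤ (4*(L:ℝ) + 3) * 225 := by nlinarith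
    _ ≤ (4*((2:ℝ)^m * R₀ + 2) + 3) * 225 := by nlinarith
    _ ≤ 3375 * R₀ * 2^m := by nlinarith


lemma idx_window {m : ℕ} {R₀ y : ℝ} {b : ℤ} (hy : |y| ≤ R₀) (h1 : (b:ℝ) ≤ (2:ℝ)^m * y)
    (h2 : (2:ℝ)^m * y < (b:ℝ) + 1) :
    b ∈ Finset.Icc (-(⌈(2:ℝ)^m * R₀⌉+1)) (⌈(2:ℝ)^m * R₀⌉+1) := by
  have hp : (0:ℝ) < (2:ℝ)^m := by positivity
  have hceil : (2:ℝ)^m * R₀ ≤ ((⌈(2:ℝ)^m * R₀⌉ : ℤ):ℝ) + 1 := by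
    have := Int.le_ceil ((2:ℝ)^m * R₀)
    linarith
  have hyu : y ≤ R₀ := le_of_abs_le hy
  have hyl : -R₀ ≤ y := neg_le_of_abs_le hy
  have hup : (2:ℝ)^m * y ≤ (2:ℝ)^m * R₀ := by nlinarith
  have hlow : -((2:ℝ)^m * R₀) ≤ (2:ℝ)^m * y := by nlinarith
  rw [Finset.mem_Icc]
  constructor
  · have : -(((⌈(2:ℝ)^m * R₀⌉ : ℤ):ℝ) + 1) - 1 < (b:ℝ) := by linarith
    have h' : -(⌈(2:ℝ)^m * R₀⌉ + 1) - 1 < b := by exact_mod_cast this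
    omega
  · have : (b:ℝ) ≤ ((⌈(2:ℝ)^m * R₀⌉:ℤ):ℝ) + 1 := by linarith
    exact_mod_cast this

lemma H2_le_proj (μ : Measure ℂ) [IsProbabilityMeasure μ] {R₀ : ℝ} (hR : 1 ≤ R₀)
    (hsupp : μ (Metric.closedBall 0 R₀)ᶜ = 0) (w : ℂ) (hw : ‖w‖ = 1) (m : ℕ) :
    H2 μ m ≤ H1 (μ.map (projMap w)) m + ((m:ℝ) + Real.logb 2 (3375 * R₀)) := by
  classical
  have hp2 : (0:ℝ) < (2:ℝ)^m := by positivity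
  have h2m : (1:ℝ) ≤ (2:ℝ)^m := one_le_pow₀ (by norm_num)
  set L : ℤ := ⌈(2:ℝ)^m * R₀⌉ + 1 with hLdef
  have hL0 : 0 ≤ L := by
    have : (0:ℤ) ≤ ⌈(2:ℝ)^m * R₀⌉ := Int.ceil_nonneg (by positivity)
    omega
  have hLreal : (L:ℝ) ≤ (2:ℝ)^m * R₀ + 2 := by
    have := Int.ceil_lt_add_one ((2:ℝ)^m * R₀)
    rw [hLdef]
    push_cast
    linarith
  set FB : Finset ℤ := Finset.Icc (-L) L with hFBdef
  set FA : Finset (ℤ × ℤ) := FB ×ˢ FB with hFAdef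
  set S : ℤ → Set ℂ := fun b => projMap w ⁻¹' cell1 m b with hSdef
  have hSmeas : ∀ b, MeasurableSet (S b) := fun b => measurable_projMap w measurableSet_cell1
  have hmap : ∀ b, (μ.map (projMap w)) (cell1 m b) = μ (S b) := fun b =>
    Measure.map_apply (measurable_projMap w) measurableSet_cell1
  have hAnull : ∀ a ∉ FA, μ (cell2 m a) = 0 := fun a ha =>
    cell2_null_outside μ R₀ hsupp m a ha
  have hball : ∀ z : ℂ, z ∈ Metric.closedBall (0:ℂ) R₀ → |projMap w z| ≤ R₀ := by
    intro z hz
    rw [Metric.mem_closedBall, Complex.dist_eq, sub_zero] at hz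
    calc |projMap w z| ≤ ‖z‖ * ‖w‖ := abs_projMap_le w z
      _ = ‖z‖ := by rw [hw, mul_one]
      _ ≤ R₀ := hz
  have hBmem : ∀ b : ℤ, ∀ z : ℂ, z ∈ S b → z ∈ Metric.closedBall (0:ℂ) R₀ → b ∈ FB := by
    intro b z hzS hzB
    have h := hball z hzB
    have hc : projMap w z ∈ cell1 m b := hzS
    obtain ⟨h1, h2⟩ := hc
    exact idx_window h h1 h2
  have hBnull : ∀ b ∉ FB, μ (S b) = 0 := by
    intro b hb
    apply measure_mono_null _ hsupp
    intro z hz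
    simp only [Set.mem_compl_iff]
    intro hzB
    exact hb (hBmem b z hz hzB)
  -- partition identities
  have hinterne : ∀ (a : ℤ × ℤ) (b : ℤ), μ (cell2 m a ∩ S b) ≠ ⊤ := fun a b => measure_ne_top μ _
  have hcellT : ∀ a : ℤ × ℤ,
      (μ (cell2 m a)).toReal = ∑ b ∈ FB, (μ (cell2 m a ∩ S b)).toReal := by
    intro a
    have hU : cell2 m a = ⋃ b : ℤ, (cell2 m a ∩ S b) := by
      rw [← Set.inter_iUnion]
      have : (⋃ b : ℤ, S b) = Set.univ := by
        rw [hSdef, ← Set.preimage_iUnion, iUnion_cell1, Set.preimage_univ]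
      rw [this, Set.inter_univ]
    have hdisj : Pairwise (Disjoint on fun b : ℤ => cell2 m a ∩ S b) := by
      intro b b' hne
      exact ((cell1_disjoint hne).preimage (projMap w)).mono
        Set.inter_subset_right Set.inter_subset_right
    have h1 : μ (cell2 m a) = ∑' b : ℤ, μ (cell2 m a ∩ S b) := by
      conv_lhs => rw [hU]
      exact measure_iUnion hdisj fun b => measurableSet_cell2.inter (hSmeas b)
    rw [h1, tsum_eq_sum (s := FB) (fun b hb =>
      measure_mono_null Set.inter_subset_right (hBnull b hb))]
    exact ENNReal.toReal_sum fun b _ => hinterne a b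
  have hstripT : ∀ b : ℤ,
      (μ (S b)).toReal = ∑ a ∈ FA, (μ (cell2 m a ∩ S b)).toReal := by
    intro b
    have hU : S b = ⋃ a : ℤ × ℤ, (cell2 m a ∩ S b) := by
      rw [← Set.iUnion_inter, iUnion_cell2, Set.univ_inter]
    have hdisj : Pairwise (Disjoint on fun a : ℤ × ℤ => cell2 m a ∩ S b) := by
      intro a a' hne
      exact (cell2_disjoint hne).mono Set.inter_subset_left Set.inter_subset_left
    have h1 : μ (S b) = ∑' a : ℤ × ℤ, μ (cell2 m a ∩ S b) := by
      conv_lhs => rw [hU]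
      exact measure_iUnion hdisj fun a => measurableSet_cell2.inter (hSmeas b)
    rw [h1, tsum_eq_sum (s := FA) (fun a ha =>
      measure_mono_null Set.inter_subset_left (hAnull a ha))]
    exact ENNReal.toReal_sum fun a _ => hinterne a b
  have hH2 : H2 μ m = ∑ a ∈ FA, plog (μ (cell2 m a)).toReal := by
    apply tsum_eq_sum
    intro a ha
    rw [hAnull a ha]
    simp [plog_zero]
  have hH1 : H1 (μ.map (projMap w)) m = ∑ b ∈ FB, plog (μ (S b)).toReal := by
    rw [H1]
    rw [tsum_congr (fun b => by rw [hmap b])]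
    apply tsum_eq_sum
    intro b hb
    rw [hBnull b hb]
    simp [plog_zero]
  set N : ℝ := 3375 * R₀ * 2^m with hNdef
  have hN1 : (1:ℝ) ≤ N := by rw [hNdef]; nlinarith
  -- counting
  have hcount : ∀ b : ℤ,
      (((FA.filter fun a => (μ (cell2 m a ∩ S b)).toReal ≠ 0).card : ℝ)) ≤ N := by
    intro b
    apply strip_count w hw hR m b hLreal hL0
    intro a ha
    rw [Finset.mem_filter] at ha
    obtain ⟨haFA, hax⟩ := ha
    have hμne : μ (cell2 m a ∩ S b) ≠ 0 := by
      intro h0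
      exact hax (by rw [h0]; simp)
    have hne : (cell2 m a ∩ S b ∩ Metric.closedBall (0:ℂ) R₀).Nonempty := by
      by_contra hcon
      rw [Set.not_nonempty_iff_eq_empty] at hcon
      apply hμne
      apply measure_mono_null _ hsupp
      intro z hz
      simp only [Set.mem_compl_iff]
      intro hzB
      exact Set.eq_empty_iff_forall_notMem.mp hcon z ⟨hz, hzB⟩
    obtain ⟨z, ⟨⟨hz1, hz2⟩, hz3⟩⟩ := hne
    obtain ⟨hc1, hc2, hc3, hc4⟩ := hz1
    have hzre : |z.re| ≤ R₀ := by
      rw [Metric.mem_closedBall, Complex.dist_eq, sub_zero] at hz3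
      exact (Complex.abs_re_le_norm z).trans hz3
    have hzim : |z.im| ≤ R₀ := by
      rw [Metric.mem_closedBall, Complex.dist_eq, sub_zero] at hz3
      exact (Complex.abs_im_le_norm z).trans hz3
    refine ⟨idx_window hzre hc1 hc2, idx_window hzim hc3 hc4, ?_⟩
    -- linear constraint
    have hproj : projMap w z ∈ cell1 m b := hz2
    obtain ⟨hb1, hb2⟩ := hproj
    have hwre : |w.re| ≤ 1 := by
      have := Complex.abs_re_le_norm w; rw [hw] at this; exact this
    have hwim : |w.im| ≤ 1 := by
      have := Complex.abs_im_le_norm w; rw [hw] at this; exact this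
    set u : ℝ := (2:ℝ)^m * z.re with hu
    set v : ℝ := (2:ℝ)^m * z.im with hvv
    have huv : (2:ℝ)^m * projMap w z = u * w.re + v * w.im := by
      rw [hu, hvv, projMap]; ring
    have h3 : |(a.1:ℝ) - u| ≤ 1 := abs_le.mpr ⟨by linarith, by linarith⟩
    have h4 : |(a.2:ℝ) - v| ≤ 1 := abs_le.mpr ⟨by linarith, by linarith⟩
    have h5 : |u * w.re + v * w.im - (b:ℝ)| ≤ 1 := by
      rw [← huv]
      have hbl : (b:ℝ) ≤ (2:ℝ)^m * projMap w z := hb1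
      have hbu : (2:ℝ)^m * projMap w z < (b:ℝ) + 1 := hb2
      exact abs_le.mpr ⟨by linarith, by linarith⟩
    have hsplit : (a.1:ℝ) * w.re + (a.2:ℝ) * w.im - (b:ℝ)
        = ((a.1:ℝ) - u) * w.re + (((a.2:ℝ) - v) * w.im + (u * w.re + v * w.im - (b:ℝ))) := by
      ring
    rw [hsplit]
    calc |((a.1:ℝ) - u) * w.re + (((a.2:ℝ) - v) * w.im + (u * w.re + v * w.im - (b:ℝ)))|
        ≤ |((a.1:ℝ) - u) * w.re| + |((a.2:ℝ) - v) * w.im + (u * w.re + v * w.im - (b:ℝ))| :=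
          abs_add_le _ _
      _ ≤ |((a.1:ℝ) - u) * w.re| + (|((a.2:ℝ) - v) * w.im| + |u * w.re + v * w.im - (b:ℝ)|) := by
          have := abs_add_le (((a.2:ℝ) - v) * w.im) (u * w.re + v * w.im - (b:ℝ))
          linarith
      _ ≤ 1 * 1 + (1 * 1 + 1) := by
          rw [abs_mul, abs_mul]
          apply add_le_add
          · apply mul_le_mul h3 hwre (abs_nonneg _) (by norm_num)
          · apply add_le_add _ h5
            apply mul_le_mul h4 hwim (abs_nonneg _) (by norm_num)
      _ = 3 := by norm_num
  -- chain of inequalities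
  have step1 : H2 μ m ≤ ∑ a ∈ FA, ∑ b ∈ FB, plog (μ (cell2 m a ∩ S b)).toReal := by
    rw [hH2]
    apply Finset.sum_le_sum
    intro a _
    rw [hcellT a]
    exact plog_sum_le_sum_plog FB _ (fun b _ => ENNReal.toReal_nonneg)
  have step2 : ∑ a ∈ FA, ∑ b ∈ FB, plog (μ (cell2 m a ∩ S b)).toReal
      = ∑ b ∈ FB, ∑ a ∈ FA, plog (μ (cell2 m a ∩ S b)).toReal := Finset.sum_comm
  have step3 : ∀ b ∈ FB, ∑ a ∈ FA, plog (μ (cell2 m a ∩ S b)).toReal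
      ≤ plog (μ (S b)).toReal + (μ (S b)).toReal * Real.logb 2 N := by
    intro b _
    have := sum_plog_le FA (fun a => (μ (cell2 m a ∩ S b)).toReal)
      (fun a _ => ENNReal.toReal_nonneg) N hN1 (hcount b)
    rwa [← hstripT b] at this
  have step5 : ∑ b ∈ FB, (μ (S b)).toReal ≤ 1 := by
    have hdisjS : (FB : Set ℤ).PairwiseDisjoint S := by
      intro b _ b' _ hne
      exact (cell1_disjoint hne).preimage (projMap w)
    have h1 : ∑ b ∈ FB, μ (S b) = μ (⋃ b ∈ FB, S b) :=
      (measure_biUnion_finset hdisjS fun b _ => hSmeas b).symm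
    have h2 : μ (⋃ b ∈ FB, S b) ≤ 1 := prob_le_one
    calc ∑ b ∈ FB, (μ (S b)).toReal = (∑ b ∈ FB, μ (S b)).toReal :=
          (ENNReal.toReal_sum fun b _ => measure_ne_top μ _).symm
      _ ≤ (1 : ℝ≥0∞).toReal := ENNReal.toReal_mono (by simp) (h1 ▸ h2)
      _ = 1 := by simp
  have hlogN : Real.logb 2 N = Real.logb 2 (3375 * R₀) + (m:ℝ) := by
    rw [hNdef, Real.logb_mul (by positivity) (by positivity), Real.logb_pow]
    have : Real.logb 2 2 = 1 := Real.logb_self_eq_one (by norm_num)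
    rw [this]
    ring
  have hlogN0 : 0 ≤ Real.logb 2 N := Real.logb_nonneg (by norm_num) hN1
  calc H2 μ m ≤ ∑ a ∈ FA, ∑ b ∈ FB, plog (μ (cell2 m a ∩ S b)).toReal := step1
    _ = ∑ b ∈ FB, ∑ a ∈ FA, plog (μ (cell2 m a ∩ S b)).toReal := step2
    _ ≤ ∑ b ∈ FB, (plog (μ (S b)).toReal + (μ (S b)).toReal * Real.logb 2 N) :=
        Finset.sum_le_sum step3
    _ = (∑ b ∈ FB, plog (μ (S b)).toReal) + (∑ b ∈ FB, (μ (S b)).toReal) * Real.logb 2 N := by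
        rw [Finset.sum_add_distrib, Finset.sum_mul]
    _ ≤ H1 (μ.map (projMap w)) m + 1 * Real.logb 2 N := by
        rw [hH1]
        apply add_le_add_right
        exact mul_le_mul_of_nonneg_right step5 hlogN0
    _ = H1 (μ.map (projMap w)) m + ((m:ℝ) + Real.logb 2 (3375 * R₀)) := by
        rw [one_mul, hlogN]; ring


/-! ### model-level facts -/


namespace PlanarModel
variable {I : Type} [Fintype I] [MeasurableSpace I] (M : PlanarModel I)


lemma coding_bound [Nonempty I] : ∃ R₀ : ℝ, 1 ≤ R₀ ∧ ∀ ω : ℕ → I,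
    Measurable (M.codingMap ω) ∧ ∀ u, ‖M.codingMap ω u‖ ≤ R₀ := by
  classical
  obtain ⟨T, hT⟩ :=
    Finite.exists_le (fun p : Σ i : I, Fin (M.k i) => ‖M.tr p.1 p.2‖)
  have hT0 : 0 ≤ T := by
    have hi : Nonempty (Σ i : I, Fin (M.k i)) :=
      ⟨⟨Classical.arbitrary I, ⟨0, M.k_pos _⟩⟩⟩
    obtain ⟨p⟩ := hi
    exact le_trans (norm_nonneg _) (hT p)
  set r : ℝ := Finset.univ.sup' Finset.univ_nonempty (fun i => ‖M.lam i‖)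
    with hrdef
  have hr1 : r < 1 := (Finset.sup'_lt_iff _).mpr fun i _ => M.lam_lt i
  have hri : ∀ i : I, ‖M.lam i‖ ≤ r := fun i =>
    Finset.le_sup' (fun i => ‖M.lam i‖) (Finset.mem_univ i)
  have hr0 : 0 ≤ r := le_trans (norm_nonneg _) (hri (Classical.arbitrary I))
  have hterm : ∀ (ω : ℕ → I) (u : (n : ℕ) → Fin (M.k (ω n))) (n : ℕ),
      ‖(∏ j ∈ Finset.range n, M.lam (ω j)) * M.tr (ω n) (u n)‖ ≤ r ^ n * T := by
    intro ω u n
    rw [norm_mul, norm_prod]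
    have h1 : ∏ j ∈ Finset.range n, ‖M.lam (ω j)‖ ≤ r ^ n := by
      calc ∏ j ∈ Finset.range n, ‖M.lam (ω j)‖
          ≤ ∏ _j ∈ Finset.range n, r :=
            Finset.prod_le_prod (fun j _ => norm_nonneg _) (fun j _ => hri _)
        _ = r ^ n := by rw [Finset.prod_const, Finset.card_range]
    have h2 : ‖M.tr (ω n) (u n)‖ ≤ T := hT ⟨ω n, u n⟩
    exact mul_le_mul h1 h2 (norm_nonneg _) (by positivity)
  have hgsum : Summable (fun n : ℕ => r ^ n * T) :=
    (summable_geometric_of_lt_one hr0 hr1).mul_right T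
  have hfsum : ∀ (ω : ℕ → I) (u : (n : ℕ) → Fin (M.k (ω n))),
      Summable (fun n : ℕ => (∏ j ∈ Finset.range n, M.lam (ω j)) * M.tr (ω n) (u n)) := by
    intro ω u
    exact Summable.of_norm_bounded hgsum (hterm ω u)
  refine ⟨max 1 ((1 - r)⁻¹ * T), le_max_left _ _, fun ω => ⟨?_, ?_⟩⟩
  · -- measurability
    apply measurable_of_tendsto_metrizable'
      (f := fun n (u : (n : ℕ) → Fin (M.k (ω n))) =>
        ∑ i ∈ Finset.range n, (∏ j ∈ Finset.range i, M.lam (ω j)) * M.tr (ω i) (u i))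
      Filter.atTop
    · intro n
      apply Finset.measurable_sum
      intro i _
      exact (measurable_of_countable
        (fun x : Fin (M.k (ω i)) => (∏ j ∈ Finset.range i, M.lam (ω j)) * M.tr (ω i) x)).comp
        (measurable_pi_apply i)
    · rw [tendsto_pi_nhds]
      intro u
      exact ((hfsum ω u).hasSum).tendsto_sum_nat
  · intro u
    calc ‖M.codingMap ω u‖
        ≤ ∑' n : ℕ, ‖(∏ j ∈ Finset.range n, M.lam (ω j)) * M.tr (ω n) (u n)‖ := by
          apply norm_tsum_le_tsum_norm
          exact Summable.of_nonneg_of_le (fun n => norm_nonneg _) (hterm ω u) hgsum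
      _ ≤ ∑' n : ℕ, r ^ n * T := by
          apply Summable.tsum_le_tsum (hterm ω u)
            (Summable.of_nonneg_of_le (fun n => norm_nonneg _) (hterm ω u) hgsum) hgsum
      _ = (1 - r)⁻¹ * T := by
          rw [tsum_mul_right, tsum_geometric_of_lt_one hr0 hr1]
      _ ≤ max 1 ((1 - r)⁻¹ * T) := le_max_right _ _

end PlanarModel


end SSmodel

/-- If α ≥ 1 then ℙ-a.s. all projections of η^(ω) onto lines have normalized
entropy at least α − 1 − ε at all sufficiently fine scales. -/
theorem stmt_7 {I : Type} [Fintype I] [MeasurableSpace I] (M : PlanarModel I)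
    (hStar : M.AssumptionStar)
    (η : (ℕ → I) → Measure ℂ) (hη : M.IsCodingFamily η)
    (α : ℝ) (hdim : ∀ᵐ ω ∂M.P, ExactDim (η ω) α) (h1 : 1 ≤ α) :
    ∀ᵐ ω ∂M.P, ∀ ε : ℝ, 0 < ε → ∃ m₀ : ℕ, ∀ m : ℕ, m₀ < m →
      α - 1 - ε ≤ ⨅ w : UnitVec, projHn w.1 (η ω) m := by
  rcases isEmpty_or_nonempty I with hI | hI
  · exfalso
    haveI : IsEmpty (ℕ → I) := ⟨fun f => IsEmpty.false (f 0)⟩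
    have h1 := M.P_prob.measure_univ
    rw [Set.univ_eq_empty_iff.mpr inferInstance, measure_empty] at h1
    exact zero_ne_one h1
  · obtain ⟨R₀, hR₀, hcode⟩ := M.coding_bound
    have hprob : ∀ ω : ℕ → I, IsProbabilityMeasure (η ω) := by
      intro ω
      obtain ⟨μ₀, ⟨hμprob, _⟩, hmapeq⟩ := hη ω
      rw [hmapeq]
      haveI := hμprob
      exact Measure.isProbabilityMeasure_map ((hcode ω).1.aemeasurable)
    have hsupp : ∀ ω : ℕ → I, (η ω) (Metric.closedBall 0 R₀)ᶜ = 0 := by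
      intro ω
      obtain ⟨μ₀, ⟨hμprob, _⟩, hmapeq⟩ := hη ω
      rw [hmapeq,
        Measure.map_apply (hcode ω).1 measurableSet_closedBall.compl]
      have hpre : (M.codingMap ω) ⁻¹' (Metric.closedBall 0 R₀)ᶜ = ∅ := by
        ext u
        simp only [Set.mem_preimage, Set.mem_compl_iff, Metric.mem_closedBall,
          Complex.dist_eq, sub_zero, Set.mem_empty_iff_false, iff_false, not_not]
        exact (hcode ω).2 u
      rw [hpre, measure_empty]
    filter_upwards [hdim] with ω hω
    intro ε hε
    haveI := hprob ω
    have hev1 := eventually_hn2_ge (η ω) (hsupp ω) hω (half_pos hε)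
    obtain ⟨N₁, hN₁⟩ := Filter.eventually_atTop.mp hev1
    set C0 : ℝ := max (Real.logb 2 (3375 * R₀)) 0 with hC0
    have hC00 : 0 ≤ C0 := le_max_right _ _
    refine ⟨max N₁ (Nat.ceil (2 * C0 / ε)), ?_⟩
    intro m hm
    have hmN₁ : N₁ ≤ m := le_of_lt (lt_of_le_of_lt (le_max_left _ _) hm)
    have hmm₁ : (Nat.ceil (2 * C0 / ε) : ℕ) ≤ m :=
      le_of_lt (lt_of_le_of_lt (le_max_right _ _) hm)
    have hm0 : 0 < m := lt_of_le_of_lt (Nat.zero_le _) hm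
    have hmr : (0:ℝ) < (m:ℝ) := by exact_mod_cast hm0
    have hC0m : C0 ≤ (m:ℝ) * ε / 2 := by
      have h1 : (2 * C0 / ε : ℝ) ≤ (Nat.ceil (2 * C0 / ε) : ℕ) := Nat.le_ceil _
      have h2 : ((Nat.ceil (2 * C0 / ε) : ℕ) : ℝ) ≤ (m:ℝ) := by exact_mod_cast hmm₁
      have h3 : (2 * C0 / ε : ℝ) ≤ (m:ℝ) := h1.trans h2
      rw [div_le_iff₀ hε] at h3
      linarith
    haveI : Nonempty UnitVec := ⟨⟨1, by simp⟩⟩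
    apply le_ciInf
    intro w
    have hH := H2_le_proj (η ω) hR₀ (hsupp ω) w.1 w.2 m
    have hHn2 : α - ε/2 ≤ Hn2 (η ω) m := hN₁ m hmN₁
    have hlogC : Real.logb 2 (3375 * R₀) ≤ C0 := le_max_left _ _
    rw [projHn, Hn1, le_div_iff₀ hmr]
    have hH2m : (α - ε/2) * (m:ℝ) ≤ H2 (η ω) m := by
      rw [Hn2, le_div_iff₀ hmr] at hHn2
      exact hHn2
    nlinarith [hH, hH2m, hC0m, hlogC, hε, hmr]
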